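/- Let β > 0, A > 0 and δ > 0. There is a constant C depending only on β, A and δ such that the following holds for every integer N ≥ 2 and every 1 ≤ d ≤ N − 1. Let λ_1, …, λ_N ∈ [−A, A], let z > A + 1, let γ_1, …, γ_N be i.i.d. random variables with the Gamma(β/2, 1) distribution, and set ρ_j = γ_j / Σ_{ℓ=1}^N γ_ℓ (a Dirichlet vector with all parameters β/2). Then P( N · (Σ_{j=1}^N ρ_j Y_j) / (Σ_{j=1}^N Y_j) ∉ (e^{−δ}, e^{δ}) ) ≤ C · N^{−3}. -/

import Mathlib

open MeasureTheory ProbabilityTheory Finset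

/-- For an index `j` of `{1,…,N}`, `Y_j` is the sum over all injective `d`-tuples
`(j_1, …, j_d)` of pairwise distinct indices in `{1,…,N} \ {j}` of
`∏_{ℓ=1}^d (z - λ_{j_ℓ})`. -/
noncomputable def Yquant (N d : ℕ) (lam : Fin N → ℝ) (z : ℝ) (j : Fin N) : ℝ :=
  ∑ f ∈ Finset.univ.filter (fun f : Fin d ↪ Fin N => ∀ l, f l ≠ j),
    ∏ l : Fin d, (z - lam (f l))

lemma pdf_shift {a t : ℝ} (ht : t < 1) (x : ℝ) :
    Real.exp (t * x) * gammaPDFReal a 1 x = (1 - t) ^ (-a) * gammaPDFReal a (1 - t) x := by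
  have h1t : (0:ℝ) < 1 - t := by linarith
  unfold gammaPDFReal
  split_ifs with h
  · rw [Real.one_rpow]
    have h1 : (1 - t) ^ (-a) * (1 - t) ^ a = 1 := by
      rw [← Real.rpow_add h1t]; simp
    have h2 : Real.exp (t * x) * Real.exp (-(1 * x)) = Real.exp (-((1 - t) * x)) := by
      rw [← Real.exp_add]; ring_nf
    calc Real.exp (t * x) * (1 / Real.Gamma a * x ^ (a-1) * Real.exp (-(1 * x)))
        = (1 / Real.Gamma a * x ^ (a-1)) * (Real.exp (t * x) * Real.exp (-(1 * x))) := by ring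
      _ = (1 / Real.Gamma a * x ^ (a-1)) * Real.exp (-((1 - t) * x)) := by rw [h2]
      _ = ((1 - t) ^ (-a) * (1 - t) ^ a) / Real.Gamma a * x ^ (a-1) * Real.exp (-((1 - t) * x)) := by
          rw [h1]; try ring
      _ = (1 - t) ^ (-a) * ((1 - t) ^ a / Real.Gamma a * x ^ (a-1) * Real.exp (-((1 - t) * x))) := by
          ring
  · ring

lemma lintegral_exp_gamma {a t : ℝ} (ha : 0 < a) (ht : t < 1) :
    ∫⁻ x, ENNReal.ofReal (Real.exp (t * x)) ∂(gammaMeasure a 1)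
      = ENNReal.ofReal ((1 - t) ^ (-a)) := by
  have h1t : (0:ℝ) < 1 - t := by linarith
  have hf : Measurable (gammaPDF a 1) := (measurable_gammaPDFReal a 1).ennreal_ofReal
  have hg : Measurable (fun x : ℝ => ENNReal.ofReal (Real.exp (t * x))) := by
    apply Measurable.ennreal_ofReal; exact (measurable_const.mul measurable_id).exp
  rw [gammaMeasure, lintegral_withDensity_eq_lintegral_mul _ hf hg]
  have heq : ∀ x : ℝ, (gammaPDF a 1 x) * ENNReal.ofReal (Real.exp (t * x))
      = ENNReal.ofReal ((1 - t) ^ (-a)) * gammaPDF a (1 - t) x := by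
    intro x
    rw [gammaPDF, gammaPDF, ← ENNReal.ofReal_mul (gammaPDFReal_nonneg ha one_pos x),
      ← ENNReal.ofReal_mul (by positivity)]
    rw [mul_comm (gammaPDFReal a 1 x), pdf_shift ht]
  simp only [Pi.mul_apply]
  have hf2 : Measurable (gammaPDF a (1 - t)) := (measurable_gammaPDFReal a (1 - t)).ennreal_ofReal
  rw [lintegral_congr heq, lintegral_const_mul _ hf2,
    lintegral_gammaPDF_eq_one ha h1t, mul_one]

lemma integrable_exp_gammaMeasure {a t : ℝ} (ha : 0 < a) (ht : t < 1) :
    Integrable (fun x => Real.exp (t * x)) (gammaMeasure a 1) := by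
  constructor
  · exact ((measurable_const.mul measurable_id).exp).aestronglyMeasurable
  · rw [hasFiniteIntegral_iff_ofReal (ae_of_all _ fun x => (Real.exp_pos _).le),
      lintegral_exp_gamma ha ht]
    exact ENNReal.ofReal_lt_top

lemma integrable_exp_gamma {a t : ℝ} (ha : 0 < a) (ht : t < 1)
    {Ω : Type} [MeasurableSpace Ω] {P : Measure Ω}
    {g : Ω → ℝ} (hg : Measurable g) (hmap : Measure.map g P = gammaMeasure a 1) :
    Integrable (fun ω => Real.exp (t * g ω)) P := by
  have h := (integrable_map_measure
    (((measurable_const.mul measurable_id).exp).aestronglyMeasurable)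
    hg.aemeasurable).mp (by rw [hmap]; exact integrable_exp_gammaMeasure ha ht)
  exact h

lemma mgf_gamma {a t : ℝ} (ha : 0 < a) (ht : t < 1)
    {Ω : Type} [MeasurableSpace Ω] {P : Measure Ω}
    {g : Ω → ℝ} (hg : Measurable g) (hmap : Measure.map g P = gammaMeasure a 1) :
    mgf g P t = (1 - t) ^ (-a) := by
  have h1t : (0:ℝ) < 1 - t := by linarith
  have hme : Measurable (fun x : ℝ => Real.exp (t * x)) := by fun_prop
  have : mgf g P t = ∫ x, Real.exp (t * x) ∂(Measure.map g P) := by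
    rw [integral_map hg.aemeasurable hme.aestronglyMeasurable]
    rfl
  rw [this, hmap, integral_eq_lintegral_of_nonneg_ae
    (ae_of_all _ fun x => (Real.exp_pos _).le) hme.aestronglyMeasurable,
    lintegral_exp_gamma ha ht, ENNReal.toReal_ofReal (by positivity)]

lemma rpow_bound_upper {a u : ℝ} (ha : 0 < a) (hu : 0 ≤ u) (hu2 : u ≤ 1/2) :
    (1 - u) ^ (-a) ≤ Real.exp (a * (u + 2 * u ^ 2)) := by
  have h1 : (0:ℝ) < 1 - u := by linarith
  rw [Real.rpow_def_of_pos h1, Real.exp_le_exp]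
  have hlog : -Real.log (1 - u) ≤ u + 2 * u ^ 2 := by
    rw [← Real.log_inv]
    have h2 : Real.log (1 - u)⁻¹ ≤ (1 - u)⁻¹ - 1 :=
      Real.log_le_sub_one_of_pos (by positivity)
    have h3 : (1 - u)⁻¹ ≤ 1 + u + 2 * u ^ 2 := by
      rw [inv_eq_one_div, div_le_iff₀ h1]
      nlinarith
    linarith
  calc Real.log (1 - u) * -a = a * (-Real.log (1 - u)) := by ring
    _ ≤ a * (u + 2 * u ^ 2) := by
        exact mul_le_mul_of_nonneg_left hlog ha.le

lemma rpow_bound_lower {a u : ℝ} (ha : 0 < a) (hu : 0 ≤ u) :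
    (1 + u) ^ (-a) ≤ Real.exp (-(a * (u - u ^ 2))) := by
  have h1 : (0:ℝ) < 1 + u := by linarith
  rw [Real.rpow_def_of_pos h1, Real.exp_le_exp]
  have hlog : u - u ^ 2 ≤ Real.log (1 + u) := by
    have h2 : Real.log (1 + u)⁻¹ ≤ (1 + u)⁻¹ - 1 :=
      Real.log_le_sub_one_of_pos (by positivity)
    rw [Real.log_inv] at h2
    have h3 : 1 - u + u ^ 2 ≥ (1 + u)⁻¹ := by
      rw [inv_eq_one_div, ge_iff_le, div_le_iff₀ h1]
      nlinarith
    nlinarith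
  nlinarith

lemma gamma_sum_tails (a b η : ℝ) (ha : 0 < a) (hb : 1 ≤ b) (hη : 0 < η) (hη1 : η ≤ 1)
    {Ω : Type} [MeasurableSpace Ω] {P : Measure Ω} [IsProbabilityMeasure P]
    {N : ℕ} (γ : Fin N → Ω → ℝ) (hmeas : ∀ j, Measurable (γ j))
    (hindep : iIndepFun γ P)
    (hmap : ∀ j, Measure.map (γ j) P = gammaMeasure a 1)
    (c : Fin N → ℝ) (hc0 : ∀ j, 0 ≤ c j) (hcb : ∀ j, c j ≤ b) (hsum : ∑ j, c j = N) :
    (P {ω | a * (1 + η) * N ≤ ∑ j, c j * γ j ω}).toReal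
        ≤ Real.exp (-(a * η ^ 2 / (8 * b ^ 2)) * N)
    ∧ (P {ω | ∑ j, c j * γ j ω ≤ a * (1 - η) * N}).toReal
        ≤ Real.exp (-(a * η ^ 2 / (8 * b ^ 2)) * N) := by
  have hb0 : (0:ℝ) < b := by linarith
  set t0 : ℝ := η / (4 * b ^ 2) with ht0def
  have ht0 : 0 < t0 := by positivity
  -- basic bounds on u_j = c j * t0
  have hu0 : ∀ j, 0 ≤ c j * t0 := fun j => mul_nonneg (hc0 j) ht0.le
  have hub : ∀ j, c j * t0 ≤ 1 / 2 := by
    intro j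
    have h1 : c j * t0 ≤ b * (η / (4 * b ^ 2)) :=
      mul_le_mul_of_nonneg_right (hcb j) ht0.le
    have h2 : b * (η / (4 * b ^ 2)) = η / (4 * b) := by field_simp
    have h3 : η / (4 * b) ≤ 1 / 2 := by
      rw [div_le_div_iff₀ (by positivity) (by norm_num)]
      nlinarith
    linarith [h1, h2 ▸ h1]
  set X : Fin N → Ω → ℝ := fun j ω => c j * γ j ω with hXdef
  have hXmeas : ∀ j, Measurable (X j) := fun j => (hmeas j).const_mul _
  have hXindep : iIndepFun X P := by
    exact hindep.comp (fun j x => c j * x) (fun j => measurable_const_mul _)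
  have hSfun : ∀ t : ℝ, (fun ω => Real.exp (t * (∑ j, X j) ω))
      = fun ω => Real.exp (t * ∑ j, c j * γ j ω) := by
    intro t; funext ω; simp [Finset.sum_apply, hXdef]
  have hintX : ∀ (t : ℝ) (j : Fin N), c j * t < 1 →
      Integrable (fun ω => Real.exp (t * X j ω)) P := by
    intro t j h
    have h2 := integrable_exp_gamma ha h (hmeas j) (hmap j)
    have heq : (fun ω => Real.exp (t * X j ω))
        = fun ω => Real.exp (c j * t * γ j ω) := by
      funext ω; congr 1; simp only [hXdef]; ring
    rw [heq]; exact h2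
  have hmgfX : ∀ (t : ℝ) (j : Fin N), c j * t < 1 →
      mgf (X j) P t = (1 - c j * t) ^ (-a) := by
    intro t j h
    have h1 : mgf (X j) P t = mgf (γ j) P (c j * t) := by
      unfold mgf
      apply integral_congr_ae
      filter_upwards with ω
      simp only [hXdef]
      congr 1
      ring
    rw [h1, mgf_gamma ha h (hmeas j) (hmap j)]
  have hc2 : ∑ j, (c j) ^ 2 ≤ b * N := by
    calc ∑ j, (c j) ^ 2 ≤ ∑ j, b * c j := by
          refine Finset.sum_le_sum fun j _ => ?_
          nlinarith [hc0 j, hcb j]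
      _ = b * N := by rw [← Finset.mul_sum, hsum]
  constructor
  · -- upper tail
    have hlt : ∀ j : Fin N, c j * t0 < 1 := fun j => lt_of_le_of_lt (hub j) (by norm_num)
    have hint : Integrable (fun ω => Real.exp (t0 * ∑ j, c j * γ j ω)) P := by
      rw [← hSfun]
      exact hXindep.integrable_exp_mul_sum hXmeas (fun j _ => hintX t0 j (hlt j))
    have hcher := measure_ge_le_exp_mul_mgf (μ := P)
      (X := fun ω => ∑ j, c j * γ j ω) (a * (1 + η) * N) ht0.le hint
    refine hcher.trans ?_
    have hmgfS : mgf (fun ω => ∑ j, c j * γ j ω) P t0 = ∏ j, (1 - c j * t0) ^ (-a) := by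
      have h1 : (fun ω => ∑ j, c j * γ j ω) = ∑ j, X j := by
        funext ω; simp [Finset.sum_apply, hXdef]
      rw [h1, hXindep.mgf_sum hXmeas]
      exact Finset.prod_congr rfl fun j _ => hmgfX t0 j (hlt j)
    rw [hmgfS]
    have hprod : ∏ j, (1 - c j * t0) ^ (-a)
        ≤ Real.exp (∑ j, a * (c j * t0 + 2 * (c j * t0) ^ 2)) := by
      rw [Real.exp_sum]
      refine Finset.prod_le_prod (fun j _ => Real.rpow_nonneg (by linarith [hlt j]) _)
        (fun j _ => rpow_bound_upper ha (hu0 j) (hub j))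
    calc Real.exp (-t0 * (a * (1 + η) * N)) * ∏ j, (1 - c j * t0) ^ (-a)
        ≤ Real.exp (-t0 * (a * (1 + η) * N))
            * Real.exp (∑ j, a * (c j * t0 + 2 * (c j * t0) ^ 2)) := by
          exact mul_le_mul_of_nonneg_left hprod (Real.exp_pos _).le
      _ = Real.exp (-t0 * (a * (1 + η) * N)
            + (a * t0 * (∑ j, c j) + 2 * a * t0 ^ 2 * ∑ j, (c j) ^ 2)) := by
          rw [← Real.exp_add]
          congr 1
          rw [Finset.mul_sum, Finset.mul_sum, ← Finset.sum_add_distrib]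
          congr 1
          refine Finset.sum_congr rfl fun j _ => ?_
          ring
      _ ≤ Real.exp (-(a * η ^ 2 / (8 * b ^ 2)) * N) := by
          rw [Real.exp_le_exp, hsum]
          have key : -t0 * (a * (1 + η) * N) + (a * t0 * N + 2 * a * t0 ^ 2 * ∑ j, (c j) ^ 2)
              ≤ a * N * t0 * (-η + 2 * t0 * b) := by
            have h4 : 2 * a * t0 ^ 2 * ∑ j, (c j) ^ 2 ≤ 2 * a * t0 ^ 2 * (b * N) :=
              mul_le_mul_of_nonneg_left hc2 (by positivity)
            nlinarith
          have key2 : a * N * t0 * (-η + 2 * t0 * b) ≤ -(a * η ^ 2 / (8 * b ^ 2)) * N := by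
            have h5 : 2 * t0 * b ≤ η / 2 := by
              have e : 2 * t0 * b = η / (2 * b) := by
                rw [ht0def]; field_simp; ring
              rw [e]
              exact div_le_div_of_nonneg_left hη.le (by norm_num) (by linarith)
            have h6 : -η + 2 * t0 * b ≤ -η / 2 := by linarith
            have h7 : a * N * t0 * (-η + 2 * t0 * b) ≤ a * N * t0 * (-η / 2) :=
              mul_le_mul_of_nonneg_left h6 (by positivity)
            calc a * N * t0 * (-η + 2 * t0 * b) ≤ a * N * t0 * (-η / 2) := h7
              _ = -(a * η ^ 2 / (8 * b ^ 2)) * N := by rw [ht0def]; field_simp; ring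
          linarith
  · -- lower tail
    have hlt : ∀ j : Fin N, c j * (-t0) < 1 := by
      intro j
      have := hu0 j
      nlinarith
    have hint : Integrable (fun ω => Real.exp (-t0 * ∑ j, c j * γ j ω)) P := by
      rw [← hSfun]
      exact hXindep.integrable_exp_mul_sum hXmeas (fun j _ => hintX (-t0) j (hlt j))
    have hcher := measure_le_le_exp_mul_mgf (μ := P)
      (X := fun ω => ∑ j, c j * γ j ω) (a * (1 - η) * N) (neg_nonpos.mpr ht0.le) hint
    refine hcher.trans ?_
    have hmgfS : mgf (fun ω => ∑ j, c j * γ j ω) P (-t0) = ∏ j, (1 + c j * t0) ^ (-a) := by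
      have h1 : (fun ω => ∑ j, c j * γ j ω) = ∑ j, X j := by
        funext ω; simp [Finset.sum_apply, hXdef]
      rw [h1, hXindep.mgf_sum hXmeas]
      refine Finset.prod_congr rfl fun j _ => ?_
      rw [hmgfX (-t0) j (hlt j)]
      congr 1
      ring
    rw [hmgfS]
    have hprod : ∏ j, (1 + c j * t0) ^ (-a)
        ≤ Real.exp (∑ j, -(a * (c j * t0 - (c j * t0) ^ 2))) := by
      rw [Real.exp_sum]
      refine Finset.prod_le_prod (fun j _ => Real.rpow_nonneg (by nlinarith [hu0 j]) _)
        (fun j _ => rpow_bound_lower ha (hu0 j))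
    calc Real.exp (- -t0 * (a * (1 - η) * N)) * ∏ j, (1 + c j * t0) ^ (-a)
        ≤ Real.exp (t0 * (a * (1 - η) * N))
            * Real.exp (∑ j, -(a * (c j * t0 - (c j * t0) ^ 2))) := by
          rw [neg_neg]
          exact mul_le_mul_of_nonneg_left hprod (Real.exp_pos _).le
      _ = Real.exp (t0 * (a * (1 - η) * N)
            + (-(a * t0 * (∑ j, c j)) + a * t0 ^ 2 * ∑ j, (c j) ^ 2)) := by
          rw [← Real.exp_add]
          congr 1
          rw [Finset.mul_sum, Finset.mul_sum, ← Finset.sum_neg_distrib, ← Finset.sum_add_distrib]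
          congr 1
          refine Finset.sum_congr rfl fun j _ => ?_
          ring
      _ ≤ Real.exp (-(a * η ^ 2 / (8 * b ^ 2)) * N) := by
          rw [Real.exp_le_exp, hsum]
          have h4 : a * t0 ^ 2 * ∑ j, (c j) ^ 2 ≤ a * t0 ^ 2 * (b * N) :=
            mul_le_mul_of_nonneg_left hc2 (by positivity)
          have key : t0 * (a * (1 - η) * N) + (-(a * t0 * N) + a * t0 ^ 2 * ∑ j, (c j) ^ 2)
              ≤ a * N * t0 * (-η + t0 * b) := by nlinarith
          have h5 : t0 * b ≤ η / 2 := by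
            have e : t0 * b = η / (4 * b) := by
              rw [ht0def]; field_simp
            rw [e]
            exact div_le_div_of_nonneg_left hη.le (by norm_num) (by linarith)
          have h6 : -η + t0 * b ≤ -η / 2 := by linarith
          have h7 : a * N * t0 * (-η + t0 * b) ≤ a * N * t0 * (-η / 2) :=
            mul_le_mul_of_nonneg_left h6 (by positivity)
          have h8 : a * N * t0 * (-η / 2) = -(a * η ^ 2 / (8 * b ^ 2)) * N := by
            rw [ht0def]; field_simp; ring
          linarith


lemma Yquant_pos {N d : ℕ} (hN : 2 ≤ N) (hd : d ≤ N - 1) {lam : Fin N → ℝ} {A z : ℝ}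
    (hlam : ∀ i, lam i ∈ Set.Icc (-A) A) (hz : A + 1 < z) (j : Fin N) :
    0 < Yquant N d lam z j := by
  obtain ⟨m, rfl⟩ : ∃ m, N = m + 1 := ⟨N - 1, by omega⟩
  have hdm : d ≤ m := by omega
  refine Finset.sum_pos (fun f _ => Finset.prod_pos fun l _ => ?_) ?_
  · have := hlam (f l)
    simp only [Set.mem_Icc] at this
    linarith [this.2]
  · refine ⟨(Fin.castLEEmb hdm).trans j.succAboveEmb, ?_⟩
    simp only [Finset.mem_filter, Finset.mem_univ, true_and]
    intro l
    exact Fin.succAbove_ne j _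

lemma Yquant_term_le {N d : ℕ} {lam : Fin N → ℝ} {A z : ℝ} (hA : 0 < A)
    (hlam : ∀ i, lam i ∈ Set.Icc (-A) A) (hz : A + 1 < z) (j k : Fin N)
    (f : Fin d ↪ Fin N) (hf : ∀ l, f l ≠ j) :
    ∏ l, (z - lam (f l)) ≤ (2 * A + 1) * ∏ l, (z - lam (Equiv.swap j k (f l))) := by
  have hfac : ∀ i : Fin N, z - A ≤ z - lam i ∧ z - lam i ≤ z + A := by
    intro i
    have := hlam i
    simp only [Set.mem_Icc] at this
    constructor <;> linarith [this.1, this.2]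
  have hfacpos : ∀ i : Fin N, 0 < z - lam i := fun i => by linarith [(hfac i).1]
  by_cases hex : ∃ l0, f l0 = k
  · obtain ⟨l0, hl0⟩ := hex
    have hswap : ∀ l ∈ Finset.univ.erase l0, z - lam (Equiv.swap j k (f l)) = z - lam (f l) := by
      intro l hl
      rw [Equiv.swap_apply_of_ne_of_ne (hf l)
        (fun h => (Finset.mem_erase.mp hl).1 (f.injective (h.trans hl0.symm)))]
    have hR : (0:ℝ) < ∏ l ∈ Finset.univ.erase l0, (z - lam (f l)) :=
      Finset.prod_pos fun l _ => hfacpos _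
    rw [← Finset.mul_prod_erase _ _ (Finset.mem_univ l0),
      ← Finset.mul_prod_erase _ (fun l => z - lam (Equiv.swap j k (f l))) (Finset.mem_univ l0),
      Finset.prod_congr rfl hswap, hl0, Equiv.swap_apply_right]
    have h1 : z - lam k ≤ z + A := (hfac k).2
    have h2 : z - A ≤ z - lam j := (hfac j).1
    have hscal : z - lam k ≤ (2 * A + 1) * (z - lam j) := by nlinarith
    exact (mul_le_mul_of_nonneg_right hscal hR.le).trans_eq (by ring)
  · have hswap : ∀ l, z - lam (Equiv.swap j k (f l)) = z - lam (f l) := by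
      intro l
      rw [Equiv.swap_apply_of_ne_of_ne (hf l) (fun h => hex ⟨l, h⟩)]
    rw [Finset.prod_congr rfl (fun l _ => hswap l)]
    have hP : (0:ℝ) < ∏ l, (z - lam (f l)) := Finset.prod_pos fun l _ => hfacpos _
    nlinarith

lemma Yquant_le {N d : ℕ} {lam : Fin N → ℝ} {A z : ℝ} (hA : 0 < A)
    (hlam : ∀ i, lam i ∈ Set.Icc (-A) A) (hz : A + 1 < z) (j k : Fin N) :
    Yquant N d lam z j ≤ (2 * A + 1) * Yquant N d lam z k := by
  unfold Yquant
  rw [Finset.mul_sum]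
  have step1 : ∑ f ∈ Finset.univ.filter (fun f : Fin d ↪ Fin N => ∀ l, f l ≠ j),
      ∏ l : Fin d, (z - lam (f l))
      ≤ ∑ f ∈ Finset.univ.filter (fun f : Fin d ↪ Fin N => ∀ l, f l ≠ j),
        (2 * A + 1) * ∏ l : Fin d, (z - lam (Equiv.swap j k (f l))) := by
    refine Finset.sum_le_sum fun f hf => ?_
    simp only [Finset.mem_filter, Finset.mem_univ, true_and] at hf
    exact Yquant_term_le hA hlam hz j k f hf
  refine step1.trans_eq ?_
  refine Finset.sum_nbij' (fun f => f.trans (Equiv.swap j k).toEmbedding)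
    (fun g => g.trans (Equiv.swap j k).toEmbedding) ?_ ?_ ?_ ?_ ?_
  · intro f hf
    simp only [Finset.mem_filter, Finset.mem_univ, true_and] at hf ⊢
    intro l h
    exact hf l ((Equiv.swap j k).injective (h.trans (Equiv.swap_apply_left j k).symm))
  · intro g hg
    simp only [Finset.mem_filter, Finset.mem_univ, true_and] at hg ⊢
    intro l h
    exact hg l ((Equiv.swap j k).injective (h.trans (Equiv.swap_apply_right j k).symm))
  · intro f _
    ext l
    simp [Function.Embedding.trans_apply]
  · intro g _
    ext l
    simp [Function.Embedding.trans_apply]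
  · intro f _
    simp [Function.Embedding.trans_apply]

set_option maxHeartbeats 2000000 in
/-- Let `β > 0`, `A > 0` and `δ > 0`.  There is a constant `C`
depending only on `β`, `A` and `δ` such that for every `N ≥ 2`, `1 ≤ d ≤ N - 1`,
`λ_1, …, λ_N ∈ [-A, A]`, `z > A + 1`, `γ_1, …, γ_N` i.i.d. `Gamma(β/2, 1)`, and
`ρ_j = γ_j / Σ_ℓ γ_ℓ` (a Dirichlet vector with all parameters `β/2`):
`P( N (Σ_j ρ_j Y_j) / (Σ_j Y_j) ∉ (e^{-δ}, e^{δ}) ) ≤ C N⁻³`. -/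
theorem dirichlet_weighted_Y_ratio_concentration
    (β A δ : ℝ) (hβ : 0 < β) (hA : 0 < A) (hδ : 0 < δ) :
    ∃ C : ℝ,
      ∀ (N d : ℕ), 2 ≤ N → 1 ≤ d → d ≤ N - 1 →
      ∀ (lam : Fin N → ℝ), (∀ j, lam j ∈ Set.Icc (-A) A) →
      ∀ (z : ℝ), A + 1 < z →
      ∀ (Ω : Type) (_ : MeasurableSpace Ω) (P : Measure Ω), IsProbabilityMeasure P →
      ∀ (γ : Fin N → Ω → ℝ),
        (∀ j, Measurable (γ j)) →
        iIndepFun γ P →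
        (∀ j, Measure.map (γ j) P = gammaMeasure (β / 2) 1) →
        (P {ω | (N : ℝ) * (∑ j, (γ j ω / ∑ l, γ l ω) * Yquant N d lam z j) /
              (∑ j, Yquant N d lam z j) ∉
            Set.Ioo (Real.exp (-δ)) (Real.exp δ)}).toReal
          ≤ C * ((N : ℝ) ^ 3)⁻¹ := by
  classical
  set a : ℝ := β / 2 with hadef
  have ha : 0 < a := by positivity
  set b : ℝ := 2 * A + 1 with hbdef
  have hb : 1 ≤ b := by simp only [hbdef]; linarith
  have hb0 : 0 < b := by linarith
  set E : ℝ := Real.exp δ with hEdef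
  have hE1 : 1 < E := by
    rw [hEdef, show (1:ℝ) = Real.exp 0 by simp]
    exact Real.exp_lt_exp.mpr hδ
  set η : ℝ := (E - 1) / (2 * (E + 1)) with hηdef
  have hη : 0 < η := by
    apply div_pos <;> linarith
  have hηhalf : η < 1 / 2 := by
    rw [hηdef, div_lt_div_iff₀ (by linarith) (by norm_num)]
    linarith
  have hη1 : η ≤ 1 := by linarith
  have hkey : 1 + η < E * (1 - η) := by
    have h1 : η * (E + 1) = (E - 1) / 2 := by
      rw [hηdef]; field_simp
    nlinarith
  set r : ℝ := a * η ^ 2 / (8 * b ^ 2) with hrdef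
  have hr : 0 < r := by positivity
  refine ⟨108 / r ^ 3, ?_⟩
  intro N d hN hd1 hd lam hlam z hz Ω mΩ P hP γ hγm hγi hγmap
  haveI := hP
  have hN0 : (0:ℝ) < N := by positivity
  have hN2 : (2:ℝ) ≤ N := by exact_mod_cast hN
  have hYpos : ∀ j, 0 < Yquant N d lam z j :=
    fun j => Yquant_pos hN hd hlam hz j
  set T : ℝ := ∑ j, Yquant N d lam z j with hTdef
  have hT : 0 < T := Finset.sum_pos (fun j _ => hYpos j)
    (Finset.univ_nonempty_iff.mpr ⟨⟨0, by omega⟩⟩)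
  set c : Fin N → ℝ := fun j => N * Yquant N d lam z j / T with hcdef
  have hc0 : ∀ j, 0 ≤ c j := fun j => by
    have := (hYpos j).le
    simp only [hcdef]
    positivity
  have hcb : ∀ j, c j ≤ b := by
    intro j
    have hYb : N * Yquant N d lam z j ≤ b * T := by
      calc (N:ℝ) * Yquant N d lam z j = ∑ _k : Fin N, Yquant N d lam z j := by
            rw [Finset.sum_const, Finset.card_univ, Fintype.card_fin, nsmul_eq_mul]
        _ ≤ ∑ k, b * Yquant N d lam z k :=
            Finset.sum_le_sum fun k _ => Yquant_le hA hlam hz j k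
        _ = b * T := by rw [← Finset.mul_sum]
    simp only [hcdef]
    rw [div_le_iff₀ hT]
    exact hYb
  have hcsum : ∑ j, c j = (N : ℝ) := by
    simp only [hcdef]
    rw [← Finset.sum_div, ← Finset.mul_sum, ← hTdef, mul_div_assoc, div_self hT.ne', mul_one]
  obtain ⟨hU_up, hU_lo⟩ := gamma_sum_tails a b η ha hb hη hη1 γ hγm hγi hγmap c hc0 hcb hcsum
  obtain ⟨hV_up, hV_lo⟩ := gamma_sum_tails a b η ha hb hη hη1 γ hγm hγi hγmap
    (fun _ => 1) (fun _ => zero_le_one) (fun _ => hb)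
    (by rw [Finset.sum_const, Finset.card_univ, Fintype.card_fin, nsmul_eq_mul, mul_one])
  set E1 : Set Ω := {ω | a * (1 + η) * N ≤ ∑ j, c j * γ j ω} with hE1def
  set E2 : Set Ω := {ω | ∑ j, c j * γ j ω ≤ a * (1 - η) * N} with hE2def
  set E3 : Set Ω := {ω | a * (1 + η) * N ≤ ∑ j, (fun _ : Fin N => (1:ℝ)) j * γ j ω} with hE3def
  set E4 : Set Ω := {ω | ∑ j, (fun _ : Fin N => (1:ℝ)) j * γ j ω ≤ a * (1 - η) * N} with hE4def
  have hsub : {ω | (N : ℝ) * (∑ j, (γ j ω / ∑ l, γ l ω) * Yquant N d lam z j) /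
        (∑ j, Yquant N d lam z j) ∉ Set.Ioo (Real.exp (-δ)) (Real.exp δ)}
      ⊆ E1 ∪ (E2 ∪ (E3 ∪ E4)) := by
    intro ω hω
    by_contra hmem
    simp only [Set.mem_union, not_or, hE1def, hE2def, hE3def, hE4def,
      Set.mem_setOf_eq, not_le] at hmem
    obtain ⟨h1, h2, h3, h4⟩ := hmem
    simp only [one_mul] at h3 h4
    set U : ℝ := ∑ j, c j * γ j ω with hUdef
    set V : ℝ := ∑ j, γ j ω with hVdef
    have hVlow : a * (1 - η) * N < V := by
      simpa [hVdef] using h4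
    have hVup : V < a * (1 + η) * N := by
      simpa [hVdef] using h3
    have haN : 0 < a * (1 - η) * N := by
      have : 0 < 1 - η := by linarith
      positivity
    have hV0 : 0 < V := lt_trans haN hVlow
    have hUlow : a * (1 - η) * N < U := h2
    have hUup : U < a * (1 + η) * N := h1
    apply hω
    have hexpr : (N : ℝ) * (∑ j, (γ j ω / ∑ l, γ l ω) * Yquant N d lam z j) /
        (∑ j, Yquant N d lam z j) = U / V := by
      have e1 : ∑ j, (γ j ω / ∑ l, γ l ω) * Yquant N d lam z j
          = (∑ j, γ j ω * Yquant N d lam z j) / V := by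
        rw [Finset.sum_div]
        refine Finset.sum_congr rfl fun j _ => ?_
        rw [hVdef]
        ring
      have e2 : U = (N : ℝ) * (∑ j, γ j ω * Yquant N d lam z j) / T := by
        rw [hUdef, Finset.mul_sum, Finset.sum_div]
        refine Finset.sum_congr rfl fun j _ => ?_
        simp only [hcdef]
        ring
      rw [e1, e2, ← hTdef]
      field_simp
    rw [hexpr]
    constructor
    · rw [Real.exp_neg, ← hEdef]
      rw [lt_div_iff₀ hV0, inv_mul_lt_iff₀ (by linarith : (0:ℝ) < E)]
      calc V < a * (1 + η) * N := hVup
        _ ≤ E * (a * (1 - η) * N) := by nlinarith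
        _ ≤ E * U := by nlinarith
    · rw [← hEdef, div_lt_iff₀ hV0]
      calc U < a * (1 + η) * N := hUup
        _ ≤ E * (a * (1 - η) * N) := by nlinarith
        _ ≤ E * V := by nlinarith
  -- combine the measures
  have hPB : (P {ω | (N : ℝ) * (∑ j, (γ j ω / ∑ l, γ l ω) * Yquant N d lam z j) /
        (∑ j, Yquant N d lam z j) ∉ Set.Ioo (Real.exp (-δ)) (Real.exp δ)}).toReal
      ≤ (P E1).toReal + (P E2).toReal + (P E3).toReal + (P E4).toReal := by
    have h1 : P {ω | (N : ℝ) * (∑ j, (γ j ω / ∑ l, γ l ω) * Yquant N d lam z j) /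
          (∑ j, Yquant N d lam z j) ∉ Set.Ioo (Real.exp (-δ)) (Real.exp δ)}
        ≤ P E1 + P E2 + P E3 + P E4 := by
      calc P _ ≤ P (E1 ∪ (E2 ∪ (E3 ∪ E4))) := measure_mono hsub
        _ ≤ P E1 + P (E2 ∪ (E3 ∪ E4)) := measure_union_le _ _
        _ ≤ P E1 + (P E2 + P (E3 ∪ E4)) := by
            gcongr
            exact measure_union_le _ _
        _ ≤ P E1 + (P E2 + (P E3 + P E4)) := by
            gcongr
            exact measure_union_le _ _
        _ = P E1 + P E2 + P E3 + P E4 := by ring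
    have h2 := ENNReal.toReal_mono (by
      refine ENNReal.add_ne_top.mpr ⟨ENNReal.add_ne_top.mpr ⟨ENNReal.add_ne_top.mpr
        ⟨measure_ne_top _ _, measure_ne_top _ _⟩, measure_ne_top _ _⟩, measure_ne_top _ _⟩) h1
    rw [ENNReal.toReal_add (ENNReal.add_ne_top.mpr ⟨ENNReal.add_ne_top.mpr
        ⟨measure_ne_top _ _, measure_ne_top _ _⟩, measure_ne_top _ _⟩) (measure_ne_top _ _),
      ENNReal.toReal_add (ENNReal.add_ne_top.mpr ⟨measure_ne_top _ _, measure_ne_top _ _⟩)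
        (measure_ne_top _ _),
      ENNReal.toReal_add (measure_ne_top _ _) (measure_ne_top _ _)] at h2
    exact h2
  have hfour : (P E1).toReal + (P E2).toReal + (P E3).toReal + (P E4).toReal
      ≤ 4 * Real.exp (-r * N) := by
    have b1 : (P E1).toReal ≤ Real.exp (-(a * η ^ 2 / (8 * b ^ 2)) * N) := hU_up
    have b2 : (P E2).toReal ≤ Real.exp (-(a * η ^ 2 / (8 * b ^ 2)) * N) := hU_lo
    have b3 : (P E3).toReal ≤ Real.exp (-(a * η ^ 2 / (8 * b ^ 2)) * N) := hV_up
    have b4 : (P E4).toReal ≤ Real.exp (-(a * η ^ 2 / (8 * b ^ 2)) * N) := hV_lo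
    rw [hrdef]
    linarith
  have hfinal : 4 * Real.exp (-r * N) ≤ (108 / r ^ 3) * ((N:ℝ) ^ 3)⁻¹ := by
    have h1 : r * N / 3 ≤ Real.exp (r * N / 3) := by
      have := Real.add_one_le_exp (r * N / 3); linarith
    have h2 : (r * N / 3) ^ 3 ≤ Real.exp (r * N / 3) ^ 3 :=
      pow_le_pow_left₀ (by positivity) h1 3
    have h3 : Real.exp (r * N / 3) ^ 3 = Real.exp (r * N) := by
      rw [← Real.exp_nat_mul]; congr 1; push_cast; ring
    have h4 : (r * N / 3) ^ 3 ≤ Real.exp (r * N) := h3 ▸ h2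
    have h5 : Real.exp (-r * N) ≤ ((r * N / 3) ^ 3)⁻¹ := by
      rw [show -r * (N:ℝ) = -(r * N) by ring, Real.exp_neg]
      exact inv_anti₀ (by positivity) h4
    calc 4 * Real.exp (-r * N) ≤ 4 * ((r * (N:ℝ) / 3) ^ 3)⁻¹ := by linarith
      _ = (108 / r ^ 3) * ((N:ℝ) ^ 3)⁻¹ := by
          field_simp
          ring
  linarith
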